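/- Let f : ℝ → [0,∞) be a positive probability density, absolutely continuous with almost-everywhere derivative f′, such that I := ∫ (1 + v²)(f′(v)/f(v))² f(v) dv < ∞ and M := sup_{v ∈ ℝ} |v f(v)| < ∞. Then for all real x ≤ y: |(1 + y²) f(y) − (1 + x²) f(x)| ≤ I^{1/2} · (∫ₓ^y (1 + v²) f(v) dv)^{1/2} + 2M(y − x). -/

import Mathlib

open MeasureTheory intervalIntegral

/-- For a positive, absolutely continuous probability density `f` (a.e. derivative `f′`,
encoded via the fundamental theorem of calculus) with finite Fisher information
`I = ∫ (1 + v²)(f′(v)/f(v))² f(v) dv` and `M ≥ sup_v |v f(v)|`, one has, for all `x ≤ y`: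
`|(1 + y²) f(y) − (1 + x²) f(x)| ≤ √I ⬝ (∫ₓ^y (1 + v²) f(v) dv)^{1/2} + 2 M (y − x)`. -/
theorem weighted_density_increment_bound
    (f f' : ℝ → ℝ)
    (hpos : ∀ z, 0 < f z) (hf : Measurable f) (hf' : Measurable f')
    (hint : Integrable f) (hdens : ∫ z, f z = 1)
    (hFTC : ∀ x y : ℝ, x ≤ y → f y - f x = ∫ v in x..y, f' v)
    (I : ℝ) (hI : I = ∫ v, (1 + v ^ 2) * (f' v / f v) ^ 2 * f v)
    (hFisher : Integrable (fun v => (1 + v ^ 2) * (f' v / f v) ^ 2 * f v))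
    (M : ℝ) (hM : ∀ v, |v * f v| ≤ M) :
    ∀ x y : ℝ, x ≤ y →
      |(1 + y ^ 2) * f y - (1 + x ^ 2) * f x|
        ≤ Real.sqrt I * Real.sqrt (∫ v in x..y, (1 + v ^ 2) * f v) + 2 * M * (y - x) := by
  intro x y hxy
  set s : Set ℝ := Set.Ioc x y with hs
  have hsm : MeasurableSet s := measurableSet_Ioc
  -- pointwise bound on 1 + v^2 over s
  set C : ℝ := 1 + x ^ 2 + y ^ 2 with hC
  have hCb : ∀ v ∈ s, 1 + v ^ 2 ≤ C := by
    intro v hv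
    have h1 : x < v := hv.1
    have h2 : v ≤ y := hv.2
    nlinarith [mul_nonneg (sub_nonneg.2 h1.le) (sub_nonneg.2 h2), sq_nonneg x, sq_nonneg y]
  -- various integrabilities
  have hFnonneg : ∀ v, 0 ≤ (1 + v ^ 2) * (f' v / f v) ^ 2 * f v := by
    intro v
    have := (hpos v).le
    positivity
  have hgi : IntegrableOn (fun v => (1 + v ^ 2) * f v) s := by
    refine Integrable.mono' ((hint.const_mul C).integrableOn) ?_ ?_
    · exact ((measurable_const.add (measurable_id.pow_const 2)).mul hf).aestronglyMeasurable
    · rw [ae_restrict_iff' hsm]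
      filter_upwards with v hv
      have h1 := hCb v hv
      have h2 := (hpos v).le
      have h3 : (0:ℝ) ≤ 1 + v ^ 2 := by positivity
      rw [Real.norm_eq_abs, abs_of_nonneg (mul_nonneg h3 h2)]
      exact mul_le_mul_of_nonneg_right h1 h2
  have hFi : IntegrableOn (fun v => (1 + v ^ 2) * (f' v / f v) ^ 2 * f v) s :=
    hFisher.integrableOn
  have key_abs : ∀ v : ℝ, |(1 + v ^ 2) * f' v|
      ≤ ((1 + v ^ 2) * (f' v / f v) ^ 2 * f v + (1 + v ^ 2) * f v) / 2 := by
    intro v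
    have hc : 0 < f v := hpos v
    set t := f' v / f v with htt
    have ht : f' v = t * f v := by rw [htt]; field_simp
    have h3 : (0:ℝ) ≤ 1 + v ^ 2 := by positivity
    rw [ht]
    have h4 : |(1 + v ^ 2) * (t * f v)| = (1 + v ^ 2) * (|t| * f v) := by
      rw [abs_mul, abs_mul, abs_of_nonneg h3, abs_of_nonneg hc.le]
    rw [h4]
    have h5 : |t| * f v ≤ (t ^ 2 * f v + f v) / 2 := by
      nlinarith [sq_nonneg (|t| - 1), sq_abs t, hc.le]
    nlinarith [mul_le_mul_of_nonneg_left h5 h3]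
  have hA'i : IntegrableOn (fun v => (1 + v ^ 2) * f' v) s := by
    refine Integrable.mono' (((hFi.add hgi).div_const 2)) ?_ ?_
    · exact ((measurable_const.add (measurable_id.pow_const 2)).mul hf').aestronglyMeasurable
    · filter_upwards with v
      rw [Real.norm_eq_abs]
      exact key_abs v
  have hf'i : IntegrableOn f' s := by
    refine Integrable.mono' hA'i.abs ?_ ?_
    · exact hf'.aestronglyMeasurable
    · filter_upwards with v
      rw [Real.norm_eq_abs, abs_mul, abs_of_nonneg (by positivity : (0:ℝ) ≤ 1 + v ^ 2)]
      nlinarith [abs_nonneg (f' v), mul_nonneg (sq_nonneg v) (abs_nonneg (f' v))]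
  have h2vi : IntegrableOn (fun v => 2 * v * f v) s := by
    refine Integrable.mono' (g := fun _ => 2 * M) (integrableOn_const measure_Ioc_lt_top.ne) ?_ ?_
    · exact ((measurable_const.mul measurable_id).mul hf).aestronglyMeasurable
    · filter_upwards with v
      rw [Real.norm_eq_abs]
      calc |2 * v * f v| = 2 * |v * f v| := by rw [mul_assoc, abs_mul]; simp
        _ ≤ 2 * M := by linarith [hM v]
  have h2vi' : IntegrableOn (fun v => 2 * v) s :=
    (continuous_const.mul continuous_id).integrableOn_Ioc
  -- the Fubini identity
  have key : ∫ u in s, f' u * (y ^ 2 - u ^ 2) = ∫ v in s, (f v - f x) * (2 * v) := by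
    set μs := volume.restrict s with hμs
    set k : ℝ → ℝ → ℝ := fun u v => if u ≤ v then f' u * (2 * v) else 0 with hk
    have hkm : Measurable (Function.uncurry k) := by
      apply Measurable.ite (measurableSet_le measurable_fst measurable_snd)
      · exact (hf'.comp measurable_fst).mul (measurable_const.mul measurable_snd)
      · exact measurable_const
    set D : ℝ := 2 * (|x| + |y|) with hD
    have hDnn : 0 ≤ D := by positivity
    have hki : Integrable (Function.uncurry k) (μs.prod μs) := by
      have hdom : Integrable (fun p : ℝ × ℝ => |f' p.1| * D) (μs.prod μs) :=
        Integrable.mul_prod hf'i.abs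
          (integrableOn_const measure_Ioc_lt_top.ne)
      refine hdom.mono' hkm.aestronglyMeasurable ?_
      have hprod : μs.prod μs = (volume.prod volume).restrict (s ×ˢ s) := by
        rw [hμs, Measure.prod_restrict]
      rw [hprod, ae_restrict_iff' (hsm.prod hsm)]
      filter_upwards with p hp
      obtain ⟨hp1, hp2⟩ := hp
      have habs2 : |p.2| ≤ |x| + |y| :=
        abs_le.2 ⟨by linarith [neg_abs_le x, abs_nonneg y, hp2.1],
          by linarith [le_abs_self y, abs_nonneg x, hp2.2]⟩
      have hyb : |2 * p.2| ≤ D := by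
        rw [abs_mul, abs_two, hD]; linarith
      rw [Real.norm_eq_abs]
      show |if p.1 ≤ p.2 then f' p.1 * (2 * p.2) else 0| ≤ |f' p.1| * D
      split_ifs with h
      · rw [abs_mul]
        exact mul_le_mul_of_nonneg_left hyb (abs_nonneg _)
      · simpa using mul_nonneg (abs_nonneg (f' p.1)) hDnn
    have hswap := MeasureTheory.integral_integral_swap hki
    have hL : (∫ u, (∫ v, k u v ∂μs) ∂μs) = ∫ u in s, f' u * (y ^ 2 - u ^ 2) := by
      refine setIntegral_congr_fun hsm ?_
      intro u hu
      show (∫ v, k u v ∂μs) = f' u * (y ^ 2 - u ^ 2)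
      have h1 : (fun v => k u v) = Set.indicator (Set.Ici u) (fun v => f' u * (2 * v)) := by
        funext v
        rw [Set.indicator_apply]
        simp only [Set.mem_Ici, hk]
      rw [h1, MeasureTheory.integral_indicator measurableSet_Ici, hμs,
        Measure.restrict_restrict measurableSet_Ici]
      have h2 : Set.Ici u ∩ s = Set.Icc u y := by
        rw [hs]; ext v
        simp only [Set.mem_inter_iff, Set.mem_Ici, Set.mem_Ioc, Set.mem_Icc]
        constructor
        · rintro ⟨h3, _, h5⟩; exact ⟨h3, h5⟩
        · rintro ⟨h3, h4⟩; exact ⟨h3, lt_of_lt_of_le hu.1 h3, h4⟩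
      have h3 : ∫ v in u..y, 2 * v = y ^ 2 - u ^ 2 := by
        rw [intervalIntegral.integral_const_mul, integral_id]; ring
      rw [h2, integral_Icc_eq_integral_Ioc, ← intervalIntegral.integral_of_le hu.2,
        intervalIntegral.integral_const_mul, h3]
    have hR : (∫ v, (∫ u, k u v ∂μs) ∂μs) = ∫ v in s, (f v - f x) * (2 * v) := by
      refine setIntegral_congr_fun hsm ?_
      intro v hv
      show (∫ u, k u v ∂μs) = (f v - f x) * (2 * v)
      have h1 : (fun u => k u v) = Set.indicator (Set.Iic v) (fun u => f' u * (2 * v)) := by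
        funext u
        rw [Set.indicator_apply]
        simp only [Set.mem_Iic, hk]
      rw [h1, MeasureTheory.integral_indicator measurableSet_Iic, hμs,
        Measure.restrict_restrict measurableSet_Iic]
      have h2 : Set.Iic v ∩ s = Set.Ioc x v := by
        rw [hs]; ext u
        simp only [Set.mem_inter_iff, Set.mem_Iic, Set.mem_Ioc]
        constructor
        · rintro ⟨h3, h4, _⟩; exact ⟨h4, h3⟩
        · rintro ⟨h3, h4⟩; exact ⟨h4, h3, le_trans h4 hv.2⟩
      rw [h2, MeasureTheory.integral_mul_const, ← intervalIntegral.integral_of_le hv.1.le,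
        ← hFTC x v hv.1.le]
    rw [← hL, ← hR]
    exact hswap
  -- FTC over s
  have hPhi : ∫ u in s, f' u = f y - f x := by
    rw [← intervalIntegral.integral_of_le hxy]
    exact (hFTC x y hxy).symm
  have h2v_int : ∫ v in s, 2 * v = y ^ 2 - x ^ 2 := by
    rw [← intervalIntegral.integral_of_le hxy]
    rw [intervalIntegral.integral_const_mul, integral_id]
    ring
  set A : ℝ := ∫ v in s, (1 + v ^ 2) * f' v with hA
  set B : ℝ := ∫ v in s, 2 * v * f v with hB
  have keyL : ∫ u in s, f' u * (y ^ 2 - u ^ 2) = (1 + y ^ 2) * (f y - f x) - A := by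
    have : ∀ u, f' u * (y ^ 2 - u ^ 2) = (1 + y ^ 2) * f' u - (1 + u ^ 2) * f' u := by
      intro u; ring
    simp_rw [this]
    rw [integral_sub (hf'i.const_mul _) hA'i, MeasureTheory.integral_const_mul, hPhi]
  have keyR : ∫ v in s, (f v - f x) * (2 * v) = B - f x * (y ^ 2 - x ^ 2) := by
    have : ∀ v, (f v - f x) * (2 * v) = 2 * v * f v - f x * (2 * v) := by
      intro v; ring
    simp_rw [this]
    rw [integral_sub h2vi (h2vi'.const_mul _), MeasureTheory.integral_const_mul, h2v_int]
  have hid : (1 + y ^ 2) * f y - (1 + x ^ 2) * f x = A + B := by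
    have h1 := key
    rw [keyL, keyR] at h1
    nlinarith [h1]
  rw [hid]
  -- bound |B|
  have hBbound : |B| ≤ 2 * M * (y - x) := by
    have h1 : |B| ≤ ∫ v in s, |2 * v * f v| := by
      have := norm_integral_le_integral_norm (μ := volume.restrict s) (fun v => 2 * v * f v)
      simp only [Real.norm_eq_abs] at this
      rw [hB]; exact this
    have h2 : ∫ v in s, |2 * v * f v| ≤ ∫ v in s, 2 * M := by
      refine setIntegral_mono_on (g := fun _ => 2 * M) h2vi.abs (integrableOn_const measure_Ioc_lt_top.ne)
        hsm ?_
      intro v _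
      calc |2 * v * f v| = 2 * |v * f v| := by rw [mul_assoc, abs_mul]; simp
        _ ≤ 2 * M := by linarith [hM v]
    have h3 : ∫ v in s, (2 * M : ℝ) = 2 * M * (y - x) := by
      rw [setIntegral_const]
      rw [hs, measureReal_def, Real.volume_Ioc, ENNReal.toReal_ofReal (by linarith), smul_eq_mul]
      ring
    linarith
  -- bound |A| via Cauchy-Schwarz
  set G : ℝ := ∫ v in s, (1 + v ^ 2) * f v with hG
  have hGnonneg : 0 ≤ G := by
    refine setIntegral_nonneg hsm fun v _ => ?_
    have := (hpos v).le; positivity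
  have hABound : |A| ≤ Real.sqrt I * Real.sqrt G := by
    set μs := volume.restrict s with hμs
    set pf : ℝ → ℝ := fun v => Real.sqrt ((1 + v ^ 2) * (f' v / f v) ^ 2 * f v) with hpf
    set qf : ℝ → ℝ := fun v => Real.sqrt ((1 + v ^ 2) * f v) with hqf
    have hqnonneg : ∀ v : ℝ, (0:ℝ) ≤ (1 + v ^ 2) * f v := by
      intro v; have := (hpos v).le; positivity
    have hpm : AEStronglyMeasurable pf μs := by
      refine Measurable.aestronglyMeasurable ?_
      exact (((measurable_const.add (measurable_id.pow_const 2)).mul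
        ((hf'.div hf).pow_const 2)).mul hf).sqrt
    have hqm : AEStronglyMeasurable qf μs := by
      refine Measurable.aestronglyMeasurable ?_
      exact ((measurable_const.add (measurable_id.pow_const 2)).mul hf).sqrt
    have hp2 : (fun v => pf v ^ 2) = fun v => (1 + v ^ 2) * (f' v / f v) ^ 2 * f v :=
      funext fun v => Real.sq_sqrt (hFnonneg v)
    have hq2 : (fun v => qf v ^ 2) = fun v => (1 + v ^ 2) * f v :=
      funext fun v => Real.sq_sqrt (hqnonneg v)
    have hmp : MemLp pf (ENNReal.ofReal 2) μs := by
      have : (ENNReal.ofReal 2) = 2 := by norm_num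
      rw [this]
      exact (memLp_two_iff_integrable_sq hpm).2 (by rw [hp2]; exact hFi)
    have hmq : MemLp qf (ENNReal.ofReal 2) μs := by
      have : (ENNReal.ofReal 2) = 2 := by norm_num
      rw [this]
      exact (memLp_two_iff_integrable_sq hqm).2 (by rw [hq2]; exact hgi)
    have h22 : (2:ℝ).HolderConjugate 2 := Real.HolderConjugate.two_two
    have hCS := integral_mul_le_Lp_mul_Lq_of_nonneg h22
      (Filter.Eventually.of_forall fun v => Real.sqrt_nonneg _)
      (Filter.Eventually.of_forall fun v => Real.sqrt_nonneg _) hmp hmq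
    have hrw : ∀ g : ℝ → ℝ, (∫ a, g a ^ (2:ℝ) ∂μs) = ∫ a, g a ^ 2 ∂μs := by
      intro g
      refine integral_congr_ae (Filter.Eventually.of_forall fun a => ?_)
      show g a ^ (2:ℝ) = g a ^ (2:ℕ)
      rw [← Real.rpow_natCast (g a) 2]; norm_num
    rw [hrw pf, hrw qf, ← Real.sqrt_eq_rpow, ← Real.sqrt_eq_rpow] at hCS
    have habs : ∀ v : ℝ, pf v * qf v = |(1 + v ^ 2) * f' v| := by
      intro v
      have hne : f v ≠ 0 := (hpos v).ne'
      rw [hpf, hqf]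
      show Real.sqrt _ * Real.sqrt _ = _
      rw [← Real.sqrt_mul (hFnonneg v)]
      have : (1 + v ^ 2) * (f' v / f v) ^ 2 * f v * ((1 + v ^ 2) * f v)
          = ((1 + v ^ 2) * f' v) ^ 2 := by
        field_simp
      rw [this, Real.sqrt_sq_eq_abs]
    have hA1 : |A| ≤ ∫ v in s, pf v * qf v := by
      have h0 := norm_integral_le_integral_norm (μ := μs) (fun v => (1 + v ^ 2) * f' v)
      simp only [Real.norm_eq_abs] at h0
      rw [hA]
      refine h0.trans_eq ?_
      exact integral_congr_ae (Filter.Eventually.of_forall fun v => (habs v).symm)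
    have hp2I : (∫ a, pf a ^ 2 ∂μs) ≤ I := by
      rw [hp2, hI]
      exact setIntegral_le_integral hFisher (Filter.Eventually.of_forall hFnonneg)
    have hq2G : (∫ a, qf a ^ 2 ∂μs) = G := by rw [hq2, hG]
    have hfinal : Real.sqrt (∫ a, pf a ^ 2 ∂μs) * Real.sqrt (∫ a, qf a ^ 2 ∂μs)
        ≤ Real.sqrt I * Real.sqrt G := by
      rw [hq2G]
      exact mul_le_mul_of_nonneg_right (Real.sqrt_le_sqrt hp2I) (Real.sqrt_nonneg _)
    calc |A| ≤ ∫ v in s, pf v * qf v := hA1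
      _ ≤ _ := hCS
      _ ≤ Real.sqrt I * Real.sqrt G := hfinal
  have hGi : (∫ v in x..y, (1 + v ^ 2) * f v) = G := intervalIntegral.integral_of_le hxy
  rw [hGi]
  calc |A + B| ≤ |A| + |B| := abs_add_le _ _
    _ ≤ Real.sqrt I * Real.sqrt G + 2 * M * (y - x) := add_le_add hABound hBbound
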